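/- If the Set endofunctors F and B preserve monomorphisms with empty domain, then every homomorphism h : (X,f) → (Y,g) of (F,B)-dialgebras factors as h = m ∘ e, where e is a surjective dialgebra homomorphism onto a dialgebra (X', f') and m is an injective dialgebra homomorphism, and this factorisation is unique up to isomorphism. -/

import Mathlib

open CategoryTheory

universe u

/-- An (F,B)-dialgebra: a set together with a map `F X → B X`. -/
structure Dialgebra (F B : Type u ⥤ Type u) where
  carrier : Type u
  str : F.obj carrier → B.obj carrier

/-- A dialgebra homomorphism: `g ∘ F h = B h ∘ f`. -/
def IsDialgHom {F B : Type u ⥤ Type u} (X Y : Dialgebra F B)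
    (h : X.carrier → Y.carrier) : Prop :=
  Y.str ∘ F.map (TypeCat.ofHom h) = B.map (TypeCat.ofHom h) ∘ X.str

lemma mapc (G : Type u ⥤ Type u) {α β γ : Type u} (f : α → β) (g : β → γ) :
    G.map (TypeCat.ofHom (g ∘ f)) = G.map (TypeCat.ofHom g) ∘ G.map (TypeCat.ofHom f) := by
  have e1 : TypeCat.ofHom (g ∘ f) = TypeCat.ofHom f ≫ TypeCat.ofHom g := rfl
  rw [e1, G.map_comp, CategoryTheory.types_comp]

lemma mapid (G : Type u ⥤ Type u) (α : Type u) : G.map (TypeCat.ofHom (id : α → α)) = (id : G.obj α → G.obj α) := by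
  have e1 : TypeCat.ofHom (id : α → α) = 𝟙 α := rfl
  rw [e1, G.map_id, CategoryTheory.types_id]

lemma map_surj (G : Type u ⥤ Type u) {α β : Type u} {f : α → β}
    (hf : Function.Surjective f) : Function.Surjective (G.map (TypeCat.ofHom f)) := by
  have h1 : f ∘ Function.surjInv hf = id := funext (Function.surjInv_eq hf)
  have h2 : G.map (TypeCat.ofHom f) ∘ G.map (TypeCat.ofHom (Function.surjInv hf)) = id := by
    rw [← mapc, h1, mapid]
  intro b
  exact ⟨G.map (TypeCat.ofHom (Function.surjInv hf)) b, congrFun h2 b⟩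

lemma map_inj (G : Type u ⥤ Type u)
    (hG : ∀ (A C : Type u) (g : A → C), IsEmpty A → Function.Injective g →
      Function.Injective (G.map (TypeCat.ofHom g)))
    {α β : Type u} {f : α → β} (hf : Function.Injective f) :
    Function.Injective (G.map (TypeCat.ofHom f)) := by
  by_cases hα : Nonempty α
  · obtain ⟨r, hr⟩ := hf.hasLeftInverse
    have h1 : r ∘ f = id := funext hr
    have h2 : G.map (TypeCat.ofHom r) ∘ G.map (TypeCat.ofHom f) = id := by rw [← mapc, h1, mapid]
    intro x y hxy
    calc x = (G.map (TypeCat.ofHom r) ∘ G.map (TypeCat.ofHom f)) x := (congrFun h2 x).symm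
      _ = (G.map (TypeCat.ofHom r) ∘ G.map (TypeCat.ofHom f)) y := congrArg (G.map (TypeCat.ofHom r)) hxy
      _ = y := congrFun h2 y
  · exact hG _ _ f (not_nonempty_iff.mp hα) hf

lemma cancel_lemma {α β γ δ : Type*} (p : γ → δ) (q : α → β) {a b : β → γ}
    (hp : Function.Injective p) (hq : Function.Surjective q)
    (h : p ∘ a ∘ q = p ∘ b ∘ q) : a = b := by
  funext x
  obtain ⟨y, rfl⟩ := hq x
  exact hp (congrFun h y)

/-- If `F` and `B` preserve monomorphisms with empty domain, then every dialgebra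
homomorphism factors as an injective homomorphism after a surjective one, uniquely
up to isomorphism of dialgebras. -/
theorem dialg_epi_mono_factorisation (F B : Type u ⥤ Type u)
    (hF : ∀ (A C : Type u) (g : A → C), IsEmpty A → Function.Injective g →
      Function.Injective (F.map (TypeCat.ofHom g)))
    (hB : ∀ (A C : Type u) (g : A → C), IsEmpty A → Function.Injective g →
      Function.Injective (B.map (TypeCat.ofHom g)))
    (X Y : Dialgebra F B) (h : X.carrier → Y.carrier) (hh : IsDialgHom X Y h) :
    ∃ (X' : Dialgebra F B) (e : X.carrier → X'.carrier) (m : X'.carrier → Y.carrier),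
      IsDialgHom X X' e ∧ IsDialgHom X' Y m ∧
      Function.Surjective e ∧ Function.Injective m ∧ m ∘ e = h ∧
      -- uniqueness of the factorisation up to isomorphism
      ∀ (X'' : Dialgebra F B) (e' : X.carrier → X''.carrier) (m' : X''.carrier → Y.carrier),
        IsDialgHom X X'' e' → IsDialgHom X'' Y m' →
        Function.Surjective e' → Function.Injective m' → m' ∘ e' = h →
        ∃ (i : X'.carrier → X''.carrier) (j : X''.carrier → X'.carrier),
          IsDialgHom X' X'' i ∧ IsDialgHom X'' X' j ∧
          i ∘ j = id ∧ j ∘ i = id ∧ i ∘ e = e' ∧ m' ∘ i = m := by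
  classical
  -- the image
  let K : Type u := {y : Y.carrier // ∃ x, h x = y}
  let e : X.carrier → K := fun x => ⟨h x, x, rfl⟩
  let m : K → Y.carrier := Subtype.val
  have hme : m ∘ e = h := rfl
  have he : Function.Surjective e := fun ⟨y, x, hx⟩ => ⟨x, Subtype.ext hx⟩
  have hm : Function.Injective m := Subtype.val_injective
  have hFe : Function.Surjective (F.map (TypeCat.ofHom e)) := map_surj F he
  have hBm : Function.Injective (B.map (TypeCat.ofHom m)) := map_inj B hB hm
  -- section of F.map (TypeCat.ofHom e)
  let s : F.obj K → F.obj X.carrier := Function.surjInv hFe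
  have hs : ∀ a, F.map (TypeCat.ofHom e) (s a) = a := Function.surjInv_eq hFe
  -- the structure map on the image
  let f' : F.obj K → B.obj K := fun a => B.map (TypeCat.ofHom e) (X.str (s a))
  let X' : Dialgebra F B := ⟨K, f'⟩
  -- key computation:  B.map (TypeCat.ofHom m) (f' a) = Y.str (F.map (TypeCat.ofHom m) a)
  have key : ∀ a, B.map (TypeCat.ofHom m) (f' a) = Y.str (F.map (TypeCat.ofHom m) a) := by
    intro a
    have c1 : B.map (TypeCat.ofHom m) (B.map (TypeCat.ofHom e) (X.str (s a))) = B.map (TypeCat.ofHom h) (X.str (s a)) := by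
      rw [← hme, mapc B e m]; rfl
    have c2 : B.map (TypeCat.ofHom h) (X.str (s a)) = Y.str (F.map (TypeCat.ofHom h) (s a)) := (congrFun hh (s a)).symm
    have c3 : F.map (TypeCat.ofHom h) (s a) = F.map (TypeCat.ofHom m) a := by
      rw [← hme, mapc F e m]; exact congrArg (F.map (TypeCat.ofHom m)) (hs a)
    simp only [f', c1, c2, c3]
  have hmhom : IsDialgHom X' Y m := by
    funext a
    exact (key a).symm
  have hehom : IsDialgHom X X' e := by
    funext b
    apply hBm
    show B.map (TypeCat.ofHom m) (f' (F.map (TypeCat.ofHom e) b)) = B.map (TypeCat.ofHom m) (B.map (TypeCat.ofHom e) (X.str b))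
    rw [key (F.map (TypeCat.ofHom e) b)]
    have c1 : B.map (TypeCat.ofHom m) (B.map (TypeCat.ofHom e) (X.str b)) = B.map (TypeCat.ofHom h) (X.str b) := by
      rw [← hme, mapc B e m]; rfl
    have c2 : B.map (TypeCat.ofHom h) (X.str b) = Y.str (F.map (TypeCat.ofHom h) b) := (congrFun hh b).symm
    have c3 : F.map (TypeCat.ofHom h) b = F.map (TypeCat.ofHom m) (F.map (TypeCat.ofHom e) b) := by rw [← hme, mapc F e m]; rfl
    rw [c1, c2, c3]
  refine ⟨X', e, m, hehom, hmhom, he, hm, hme, ?_⟩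
  -- uniqueness
  intro X'' e' m' he'hom hm'hom he' hm' hme'
  have hBm' : Function.Injective (B.map (TypeCat.ofHom m')) := map_inj B hB hm'
  have hFe' : Function.Surjective (F.map (TypeCat.ofHom e')) := map_surj F he'
  let t : K → X.carrier := Function.surjInv he
  have ht : ∀ k, e (t k) = k := Function.surjInv_eq he
  let t' : X''.carrier → X.carrier := Function.surjInv he'
  have ht' : ∀ k, e' (t' k) = k := Function.surjInv_eq he'
  let i : K → X''.carrier := e' ∘ t
  let j : X''.carrier → K := e ∘ t'
  have hm'i : m' ∘ i = m := by
    funext k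
    have h1 := congrFun hme' (t k)
    simp only [Function.comp_apply] at h1
    have hmk : m k = h (t k) := by conv_lhs => rw [← ht k]
    show m' (e' (t k)) = m k
    exact h1.trans hmk.symm
  have hmj : m ∘ j = m' := by
    funext k
    have h2 := congrFun hme' (t' k)
    simp only [Function.comp_apply] at h2
    have hmk : m' k = h (t' k) := by
      conv_lhs => rw [← ht' k]
      exact h2
    show m (e (t' k)) = m' k
    exact hmk.symm
  have hie : i ∘ e = e' := by
    funext x
    apply hm'
    have h1 := congrFun hm'i (e x)
    have h3 := congrFun hme' x
    simp only [Function.comp_apply] at h1 h3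
    show m' (i (e x)) = m' (e' x)
    exact h1.trans h3.symm
  have hje : j ∘ e' = e := by
    funext x
    apply hm
    have h1 := congrFun hmj (e' x)
    have h2 := congrFun hme' x
    simp only [Function.comp_apply] at h1 h2
    show m (j (e' x)) = m (e x)
    exact h1.trans h2
  have hij : i ∘ j = id := by
    funext k
    apply hm'
    have h1 := congrFun hm'i (j k)
    have h2 := congrFun hmj k
    simp only [Function.comp_apply] at h1 h2
    show m' (i (j k)) = m' k
    rw [h1, h2]
  have hji : j ∘ i = id := by
    funext k
    apply hm
    have h1 := congrFun hmj (i k)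
    have h2 := congrFun hm'i k
    simp only [Function.comp_apply] at h1 h2
    show m (j (i k)) = m k
    rw [h1, h2]
  -- i is a dialgebra hom
  have hihom : IsDialgHom X' X'' i := by
    apply cancel_lemma (B.map (TypeCat.ofHom m')) (F.map (TypeCat.ofHom e)) hBm' hFe
    calc B.map (TypeCat.ofHom m') ∘ (X''.str ∘ F.map (TypeCat.ofHom i)) ∘ F.map (TypeCat.ofHom e)
        = B.map (TypeCat.ofHom m') ∘ X''.str ∘ F.map (TypeCat.ofHom (i ∘ e)) := by rw [mapc F e i]; rfl
      _ = B.map (TypeCat.ofHom m') ∘ X''.str ∘ F.map (TypeCat.ofHom e') := by rw [hie]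
      _ = Y.str ∘ F.map (TypeCat.ofHom m') ∘ F.map (TypeCat.ofHom e') := by
          rw [← Function.comp_assoc, ← hm'hom]; rfl
      _ = Y.str ∘ F.map (TypeCat.ofHom (m' ∘ e')) := by rw [mapc F e' m']
      _ = Y.str ∘ F.map (TypeCat.ofHom (m ∘ e)) := by rw [hme', hme]
      _ = Y.str ∘ F.map (TypeCat.ofHom m) ∘ F.map (TypeCat.ofHom e) := by rw [mapc F e m]
      _ = B.map (TypeCat.ofHom m) ∘ X'.str ∘ F.map (TypeCat.ofHom e) := by
          rw [← Function.comp_assoc, hmhom]; rfl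
      _ = B.map (TypeCat.ofHom (m' ∘ i)) ∘ X'.str ∘ F.map (TypeCat.ofHom e) := by rw [hm'i]
      _ = B.map (TypeCat.ofHom m') ∘ (B.map (TypeCat.ofHom i) ∘ X'.str) ∘ F.map (TypeCat.ofHom e) := by rw [mapc B i m']; rfl
  have hjhom : IsDialgHom X'' X' j := by
    apply cancel_lemma (B.map (TypeCat.ofHom m)) (F.map (TypeCat.ofHom e')) hBm hFe'
    calc B.map (TypeCat.ofHom m) ∘ (X'.str ∘ F.map (TypeCat.ofHom j)) ∘ F.map (TypeCat.ofHom e')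
        = B.map (TypeCat.ofHom m) ∘ X'.str ∘ F.map (TypeCat.ofHom (j ∘ e')) := by rw [mapc F e' j]; rfl
      _ = B.map (TypeCat.ofHom m) ∘ X'.str ∘ F.map (TypeCat.ofHom e) := by rw [hje]
      _ = Y.str ∘ F.map (TypeCat.ofHom m) ∘ F.map (TypeCat.ofHom e) := by
          rw [← Function.comp_assoc, ← hmhom]; rfl
      _ = Y.str ∘ F.map (TypeCat.ofHom (m ∘ e)) := by rw [mapc F e m]
      _ = Y.str ∘ F.map (TypeCat.ofHom (m' ∘ e')) := by rw [hme, hme']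
      _ = Y.str ∘ F.map (TypeCat.ofHom m') ∘ F.map (TypeCat.ofHom e') := by rw [mapc F e' m']
      _ = B.map (TypeCat.ofHom m') ∘ X''.str ∘ F.map (TypeCat.ofHom e') := by
          rw [← Function.comp_assoc, hm'hom]; rfl
      _ = B.map (TypeCat.ofHom (m ∘ j)) ∘ X''.str ∘ F.map (TypeCat.ofHom e') := by rw [hmj]
      _ = B.map (TypeCat.ofHom m) ∘ (B.map (TypeCat.ofHom j) ∘ X''.str) ∘ F.map (TypeCat.ofHom e') := by rw [mapc B j m]; rfl
  exact ⟨i, j, hihom, hjhom, hij, hji, hie, hm'i⟩
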